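/- Let X and Y be spectral (coherent) topological spaces and let f : X → Y be a continuous spectral map with dense range. Then every minimal point of Y lies in the range of f; that is, if y₀ ∈ Y has no proper generalization (for every y ∈ Y, y₀ ∈ closure{y} implies y ∈ closure{y₀}; equivalently, y₀ is the generic point of an irreducible component of Y), then y₀ ∈ range f. -/

import Mathlib

/-- A topological space is spectral (coherent) if it is compact, `T0`, quasi-sober,
quasi-separated, and its compact open sets form a basis of the topology. -/
def IsSpectralSpace (X : Type*) [TopologicalSpace X] : Prop :=
  CompactSpace X ∧ T0Space X ∧ QuasiSober X ∧ QuasiSeparatedSpace X ∧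
    TopologicalSpace.IsTopologicalBasis {U : Set X | IsOpen U ∧ IsCompact U}

/-- If `f : X → Y` is a dominant spectral map of spectral spaces, then every minimal
point of `Y` lies in the range of `f`. -/
theorem stmt_6 {X Y : Type*} [TopologicalSpace X] [TopologicalSpace Y]
    (hX : IsSpectralSpace X) (hY : IsSpectralSpace Y)
    (f : X → Y) (hf : IsSpectralMap f) (hdom : DenseRange f)
    (y₀ : Y) (hmin : ∀ y : Y, y₀ ∈ closure {y} → y ∈ closure {y₀}) :
    y₀ ∈ Set.range f := by
  classical
  obtain ⟨hXc, hXt0, hXsob, hXqs, hXbasis⟩ := hX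
  obtain ⟨hYc, hYt0, hYsob, hYqs, hYbasis⟩ := hY
  haveI := hXsob
  haveI := hYt0
  -- The key family of closed sets
  set S : Set (Set X) := {C | IsClosed C ∧ y₀ ∈ closure (f '' C)} with hS
  -- membership criterion via compact open neighborhoods of y₀
  have hcrit : ∀ C : Set X, y₀ ∈ closure (f '' C) ↔
      ∀ U : Set Y, IsOpen U → IsCompact U → y₀ ∈ U → (C ∩ f ⁻¹' U).Nonempty := by
    intro C
    constructor
    · intro h U hUo hUc hyU
      rcases mem_closure_iff.1 h U hUo hyU with ⟨z, hzU, x, hxC, rfl⟩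
      exact ⟨x, hxC, hzU⟩
    · intro h
      rw [mem_closure_iff]
      intro V hVo hyV
      rcases hYbasis.exists_subset_of_mem_open hyV hVo with ⟨U, ⟨hUo, hUc⟩, hyU, hUV⟩
      rcases h U hUo hUc hyU with ⟨x, hxC, hxU⟩
      exact ⟨f x, hUV hxU, x, hxC, rfl⟩
  -- Zorn's lemma: find a minimal element of S
  have huniv : (Set.univ : Set X) ∈ S := by
    refine ⟨isClosed_univ, ?_⟩
    rw [Set.image_univ, hdom.closure_range]
    trivial
  have hzorn : ∃ m, m ⊆ Set.univ ∧ Minimal (· ∈ S) m := by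
    refine zorn_superset_nonempty S ?_ _ huniv
    intro c hcS hchain hcne
    refine ⟨⋂₀ c, ⟨isClosed_sInter fun C hC => (hcS hC).1, ?_⟩, fun s hs => Set.sInter_subset_of_mem hs⟩
    rw [hcrit]
    intro U hUo hUc hyU
    have hpre : IsCompact (f ⁻¹' U) := hUc.preimage_of_isOpen hf hUo
    have : (f ⁻¹' U ∩ ⋂ C : c, (C : Set X)).Nonempty := by
      refine hpre.inter_iInter_nonempty _ (fun C => (hcS C.2).1) ?_
      intro t
      rcases t.eq_empty_or_nonempty with rfl | htne
      · simp only [Finset.notMem_empty, Set.iInter_of_empty, Set.iInter_univ, Set.inter_univ]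
        rcases hdom.exists_mem_open hUo ⟨y₀, hyU⟩ with ⟨x, hx⟩
        exact ⟨x, hx⟩
      · -- a finite nonempty subset of a chain has a least element
        obtain ⟨i₀, hi₀t, hi₀min⟩ := t.exists_minimal htne
        have hleast : ∀ i ∈ t, (i₀ : Set X) ⊆ (i : Set X) := by
          intro i hit
          rcases eq_or_ne i i₀ with rfl | hne
          · exact subset_rfl
          · rcases hchain i₀.2 i.2 (fun h => hne (Subtype.ext h.symm)) with h | h
            · exact h
            · exact hi₀min hit h
        have h0 : ((i₀ : Set X) ∩ f ⁻¹' U).Nonempty := by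
          have := (hcS i₀.2).2
          rw [hcrit] at this
          exact this U hUo hUc hyU
        rcases h0 with ⟨x, hxi, hxU⟩
        exact ⟨x, hxU, Set.mem_iInter₂.2 fun i hit => hleast i hit hxi⟩
    rcases this with ⟨x, hxU, hxI⟩
    refine ⟨x, ?_, hxU⟩
    rw [Set.mem_sInter]
    intro C hC
    exact Set.mem_iInter.1 hxI ⟨C, hC⟩
  obtain ⟨m, -, hmS, hmmin⟩ := hzorn
  have hmcl : IsClosed m := hmS.1
  have hmy : y₀ ∈ closure (f '' m) := hmS.2
  -- m is nonempty
  have hmne : m.Nonempty := by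
    rcases m.eq_empty_or_nonempty with rfl | h
    · rw [Set.image_empty, closure_empty] at hmy
      exact absurd hmy (Set.notMem_empty _)
    · exact h
  -- m is irreducible
  have hmirr : IsIrreducible m := by
    refine ⟨hmne, fun u v hu hv hmu hmv => ?_⟩
    by_contra hcon
    have hempty : m ∩ (u ∩ v) = ∅ := Set.not_nonempty_iff_eq_empty.1 hcon
    have hcover : m ⊆ (m \ u) ∪ (m \ v) := by
      intro x hx
      by_cases hxu : x ∈ u
      · right
        refine ⟨hx, fun hxv => ?_⟩
        have : x ∈ m ∩ (u ∩ v) := ⟨hx, hxu, hxv⟩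
        rw [hempty] at this
        exact this
      · exact Or.inl ⟨hx, hxu⟩
    have hclu : IsClosed (m \ u) := hmcl.sdiff hu
    have hclv : IsClosed (m \ v) := hmcl.sdiff hv
    have himg : f '' m ⊆ f '' (m \ u) ∪ f '' (m \ v) := by
      rw [← Set.image_union]; exact Set.image_mono hcover
    have : y₀ ∈ closure (f '' (m \ u)) ∪ closure (f '' (m \ v)) := by
      have := closure_mono himg hmy
      rwa [closure_union] at this
    rcases this with h | h
    · have hsub : m ⊆ m \ u := hmmin ⟨hclu, h⟩ Set.diff_subset
      rcases hmu with ⟨x, hxm, hxu⟩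
      exact (hsub hxm).2 hxu
    · have hsub : m ⊆ m \ v := hmmin ⟨hclv, h⟩ Set.diff_subset
      rcases hmv with ⟨x, hxm, hxv⟩
      exact (hsub hxm).2 hxv
  -- generic point
  obtain ⟨x, hx⟩ := hXsob.sober hmirr hmcl
  have hclx : closure {x} = m := hx
  -- f '' m ⊆ closure {f x}
  have himg : f '' m ⊆ closure {f x} := by
    rw [← hclx]
    intro z hz
    rcases hz with ⟨w, hw, rfl⟩
    have := image_closure_subset_closure_image hf.continuous (s := ({x} : Set X)) ⟨w, hw, rfl⟩
    simpa using this
  have hy₀x : y₀ ∈ closure {f x} :=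
    (closure_minimal himg isClosed_closure) hmy
  have hfx : f x ∈ closure {y₀} := hmin _ hy₀x
  have : f x = y₀ := by
    have h1 : f x ⤳ y₀ := specializes_iff_mem_closure.2 hy₀x
    have h2 : y₀ ⤳ f x := specializes_iff_mem_closure.2 hfx
    exact (h1.antisymm h2).eq
  exact ⟨x, this⟩
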